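/- Under the hypothesis |D²V(x)| ≤ C⟨∇V(x)⟩^{1−ρ₀} (ρ₀ > 0), for every c > 0 there exists C₁(c) ≥ 1 such that ⟨∇V(y)⟩ ≤ C₁(c)⟨∇V(x)⟩ whenever |x−y| ≤ c⟨∇V(x)⟩^{−s}, where s > 0 is fixed. -/

import Mathlib

set_option maxHeartbeats 1000000

noncomputable section

/-- The Japanese bracket of the gradient: `⟨∇V(x)⟩ = √(1 + |∇V(x)|²)`. -/
def japGrad {d : ℕ} (V : EuclideanSpace ℝ (Fin d) → ℝ) (x : EuclideanSpace ℝ (Fin d)) : ℝ :=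
  Real.sqrt (‖fderiv ℝ V x‖ ^ 2 + 1)

lemma one_le_japGrad {d : ℕ} (V : EuclideanSpace ℝ (Fin d) → ℝ) (x : EuclideanSpace ℝ (Fin d)) :
    1 ≤ japGrad V x := by
  have h := Real.sqrt_le_sqrt (show (1:ℝ) ≤ ‖fderiv ℝ V x‖ ^ 2 + 1 by
    have := sq_nonneg ‖fderiv ℝ V x‖; linarith)
  rwa [Real.sqrt_one] at h

/-- under `|D²V(x)| ≤ C⟨∇V(x)⟩^{1−ρ₀}` (`ρ₀ > 0`), for every `c > 0`
there exists `C₁(c) ≥ 1` such that `⟨∇V(y)⟩ ≤ C₁(c)⟨∇V(x)⟩` whenever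
`|x−y| ≤ c⟨∇V(x)⟩^{−s}`, `s > 0` being fixed. -/
theorem gradient_comparison (d : ℕ) (V : EuclideanSpace ℝ (Fin d) → ℝ) (hV : ContDiff ℝ 2 V)
    (C ρ₀ s : ℝ) (hρ₀ : 0 < ρ₀) (hs : 0 < s)
    (hC : ∀ x, ‖fderiv ℝ (fderiv ℝ V) x‖ ≤ C * japGrad V x ^ (1 - ρ₀)) :
    ∀ c : ℝ, 0 < c → ∃ C₁ : ℝ, 1 ≤ C₁ ∧
      ∀ x y : EuclideanSpace ℝ (Fin d),
        ‖x - y‖ ≤ c * japGrad V x ^ (-s) → japGrad V y ≤ C₁ * japGrad V x := by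
  intro c hc
  -- C is nonnegative
  have hC0 : 0 ≤ C := by
    by_contra h
    push_neg at h
    have h1 : (0:ℝ) < japGrad V 0 ^ (1 - ρ₀) :=
      Real.rpow_pos_of_pos (lt_of_lt_of_le one_pos (one_le_japGrad V 0)) _
    have := (norm_nonneg (fderiv ℝ (fderiv ℝ V) 0)).trans (hC 0)
    nlinarith
  -- replace ρ₀ by ρ = min ρ₀ 1 ∈ (0,1]
  set ρ : ℝ := min ρ₀ 1 with hρdef
  have hρ0 : 0 < ρ := lt_min hρ₀ one_pos
  have hρ1 : ρ ≤ 1 := min_le_right _ _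
  have hC' : ∀ x, ‖fderiv ℝ (fderiv ℝ V) x‖ ≤ C * japGrad V x ^ (1 - ρ) := by
    intro x
    refine (hC x).trans (mul_le_mul_of_nonneg_left ?_ hC0)
    exact Real.rpow_le_rpow_of_exponent_le (one_le_japGrad V x) (by
      have : ρ ≤ ρ₀ := min_le_left _ _
      linarith)
  set K : ℝ := C * c with hKdef
  have hK0 : 0 ≤ K := mul_nonneg hC0 hc.le
  refine ⟨max 2 ((2 * K) ^ (1 / ρ)), le_trans (by norm_num) (le_max_left _ _), ?_⟩
  intro x y hxy
  set J : ℝ := japGrad V x with hJdef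
  have hJ1 : 1 ≤ J := one_le_japGrad V x
  have hJ0 : 0 < J := lt_of_lt_of_le one_pos hJ1
  -- distance bound
  have hdist : ‖y - x‖ ≤ c := by
    have h1 : japGrad V x ^ (-s) ≤ 1 :=
      Real.rpow_le_one_of_one_le_of_nonpos hJ1 (by linarith)
    have := hxy.trans (by nlinarith : c * japGrad V x ^ (-s) ≤ c)
    rwa [norm_sub_rev] at this
  -- the segment and the max of japGrad on it
  set f := fderiv ℝ V with hfdef
  have hf1 : ContDiff ℝ 1 f := hV.fderiv_right (by norm_num)
  have hfd : Differentiable ℝ f := hf1.differentiable one_ne_zero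
  have hfc : Continuous f := hf1.continuous
  have hcont : Continuous (japGrad V) := by
    apply Real.continuous_sqrt.comp
    exact ((hfc.norm.pow 2).add continuous_const)
  have hsegc : IsCompact (segment ℝ x y) := by
    rw [segment_eq_image ℝ x y]
    exact isCompact_Icc.image (by fun_prop)
  obtain ⟨z₀, hz₀mem, hz₀max⟩ :=
    hsegc.exists_isMaxOn ⟨x, left_mem_segment ℝ x y⟩
      (hcont.continuousOn)
  set M : ℝ := japGrad V z₀ with hMdef
  have hJM : J ≤ M := hz₀max (left_mem_segment ℝ x y)
  have hM1 : 1 ≤ M := hJ1.trans hJM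
  have hM0 : 0 < M := lt_of_lt_of_le one_pos hM1
  -- mean value bound on the segment
  have hbound : ∀ z ∈ segment ℝ x y, ‖fderiv ℝ f z‖ ≤ C * M ^ (1 - ρ) := by
    intro z hz
    refine (hC' z).trans (mul_le_mul_of_nonneg_left ?_ hC0)
    have hle : japGrad V z ≤ M := hz₀max hz
    have h0 : (0:ℝ) ≤ japGrad V z := le_trans zero_le_one (one_le_japGrad V z)
    exact Real.rpow_le_rpow h0 hle (by linarith)
  have hmvt : ‖f z₀ - f x‖ ≤ C * M ^ (1 - ρ) * ‖z₀ - x‖ :=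
    (convex_segment x y).norm_image_sub_le_of_norm_fderiv_le
      (fun z _ => hfd z) hbound (left_mem_segment ℝ x y) hz₀mem
  have hz₀dist : ‖z₀ - x‖ ≤ c := by
    obtain ⟨a, b, ha, hb, hab, rfl⟩ := hz₀mem
    have : a • x + b • y - x = b • (y - x) := by
      rw [show (a:ℝ) = 1 - b by linarith]
      module
    rw [this, norm_smul, Real.norm_eq_abs, abs_of_nonneg hb]
    calc b * ‖y - x‖ ≤ 1 * ‖y - x‖ := by
          apply mul_le_mul_of_nonneg_right (by linarith) (norm_nonneg _)
      _ ≤ c := by rw [one_mul]; exact hdist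
  have hMpow0 : (0:ℝ) < M ^ (1 - ρ) := Real.rpow_pos_of_pos hM0 _
  have hfz₀ : ‖f z₀‖ ≤ ‖f x‖ + K * M ^ (1 - ρ) := by
    have h1 : ‖f z₀‖ - ‖f x‖ ≤ ‖f z₀ - f x‖ := norm_sub_norm_le _ _
    have h2 : C * M ^ (1 - ρ) * ‖z₀ - x‖ ≤ C * M ^ (1 - ρ) * c :=
      mul_le_mul_of_nonneg_left hz₀dist (by positivity)
    have : K * M ^ (1 - ρ) = C * M ^ (1 - ρ) * c := by ring
    nlinarith
  -- M ≤ J + K * M^(1-ρ)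
  have hkey : M ≤ J + K * M ^ (1 - ρ) := by
    set b : ℝ := K * M ^ (1 - ρ) with hbdef
    have hb : (0:ℝ) ≤ b := by positivity
    set a : ℝ := ‖f x‖ with hadef
    have ha : (0:ℝ) ≤ a := norm_nonneg _
    have hJa : a ≤ J := by
      have h1 : a = Real.sqrt (a ^ 2) := (Real.sqrt_sq ha).symm
      rw [hJdef]
      unfold japGrad
      rw [h1]
      exact Real.sqrt_le_sqrt (by nlinarith)
    have h1 : M ≤ Real.sqrt ((a + b) ^ 2 + 1) := by
      rw [hMdef]
      unfold japGrad
      apply Real.sqrt_le_sqrt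
      exact add_le_add_left (pow_le_pow_left₀ (norm_nonneg (f z₀)) hfz₀ 2) 1
    have hJsq : J ^ 2 = a ^ 2 + 1 := by
      rw [hJdef]; unfold japGrad; rw [Real.sq_sqrt (by positivity)]
    have h2 : Real.sqrt ((a + b) ^ 2 + 1) ≤ J + b := by
      have h3 : (a + b) ^ 2 + 1 ≤ (J + b) ^ 2 := by nlinarith
      calc Real.sqrt ((a + b) ^ 2 + 1) ≤ Real.sqrt ((J + b) ^ 2) :=
            Real.sqrt_le_sqrt h3
        _ = J + b := Real.sqrt_sq (by linarith)
    exact h1.trans h2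
  -- scalar bootstrap: F := M / J satisfies F ≤ 1 + K F^(1-ρ), hence F ≤ C₁
  set F : ℝ := M / J with hFdef
  have hF1 : 1 ≤ F := (one_le_div hJ0).mpr hJM
  have hF0 : 0 < F := lt_of_lt_of_le one_pos hF1
  have hMFJ : M = F * J := (div_mul_cancel₀ M hJ0.ne').symm
  have hscalar : F ≤ 1 + K * F ^ (1 - ρ) := by
    have hMr : M ^ (1 - ρ) = F ^ (1 - ρ) * J ^ (1 - ρ) := by
      rw [hMFJ, Real.mul_rpow hF0.le hJ0.le]
    have hJr : J ^ (1 - ρ) ≤ J := by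
      calc J ^ (1 - ρ) ≤ J ^ (1:ℝ) :=
            Real.rpow_le_rpow_of_exponent_le hJ1 (by linarith)
        _ = J := Real.rpow_one J
    have h4 : K * M ^ (1 - ρ) ≤ K * F ^ (1 - ρ) * J := by
      rw [hMr]
      have hFr : (0:ℝ) ≤ F ^ (1 - ρ) := (Real.rpow_pos_of_pos hF0 _).le
      calc K * (F ^ (1-ρ) * J ^ (1-ρ)) = K * F ^ (1-ρ) * J ^ (1-ρ) := by ring
        _ ≤ K * F ^ (1-ρ) * J := by
            apply mul_le_mul_of_nonneg_left hJr (by positivity)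
    have h5 : F * J ≤ (1 + K * F ^ (1 - ρ)) * J := by
      rw [← hMFJ]
      calc M ≤ J + K * M ^ (1 - ρ) := hkey
        _ ≤ J + K * F ^ (1 - ρ) * J := by linarith
        _ = (1 + K * F ^ (1 - ρ)) * J := by ring
    exact le_of_mul_le_mul_right h5 hJ0
  have hFC₁ : F ≤ max 2 ((2 * K) ^ (1 / ρ)) := by
    by_contra h
    push_neg at h
    rw [max_lt_iff] at h
    obtain ⟨h2F, hKF⟩ := h
    have hFρ : 2 * K < F ^ ρ := by
      have := Real.rpow_lt_rpow (Real.rpow_nonneg (by linarith) _) hKF hρ0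
      rwa [← Real.rpow_mul (by linarith : (0:ℝ) ≤ 2 * K), one_div_mul_cancel hρ0.ne',
        Real.rpow_one] at this
    have hFρ0 : (0:ℝ) < F ^ ρ := Real.rpow_pos_of_pos hF0 _
    have hF1ρ0 : (0:ℝ) < F ^ (1 - ρ) := Real.rpow_pos_of_pos hF0 _
    have hprod : F ^ ρ * F ^ (1 - ρ) = F := by
      rw [← Real.rpow_add hF0]; norm_num
    have h6 : K * F ^ (1 - ρ) < F / 2 := by
      have := mul_lt_mul_of_pos_right hFρ hF1ρ0
      rw [hprod] at this
      linarith
    linarith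
  calc japGrad V y ≤ M := hz₀max (right_mem_segment ℝ x y)
    _ = F * J := hMFJ
    _ ≤ max 2 ((2 * K) ^ (1 / ρ)) * J := by
        apply mul_le_mul_of_nonneg_right hFC₁ hJ0.le
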